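/- For every DFA 𝒜 over the alphabet Fin k and every Parikh vector p : Fin k → ℕ, there exists a DFA 𝒜' over the alphabet Fin (k+1) whose set of accepting states is the singleton consisting of its start state, such that N(𝒜,p) = N(𝒜',p'), where p' : Fin (k+1) → ℕ agrees with p on the first k letters and assigns the value 1 to the new letter. -/

import Mathlib

open scoped Classical

/-- `N(A,p)`: the number of words accepted by the DFA `A` whose Parikh image is `p`,
i.e. in which every letter `a` occurs exactly `p a` times. -/
noncomputable def parikhCount {σ Q : Type} [DecidableEq σ] (A : DFA σ Q) (p : σ → ℕ) : ℕ :=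
  Nat.card {l : List σ // l ∈ A.accepts ∧ ∀ a : σ, l.count a = p a}

namespace ParikhProofAux

variable {k : ℕ} {Q : Type}

def sim (A : DFA (Fin k) Q) : Q ⊕ Bool → Option Q
  | Sum.inl q => some q
  | Sum.inr true => some A.start
  | Sum.inr false => none

noncomputable def ext (A : DFA (Fin k) Q) : DFA (Fin (k + 1)) (Q ⊕ Bool) where
  step s a :=
    match sim A s with
    | none => Sum.inr false
    | some q =>
      if h : a = Fin.last k then
        (if q ∈ A.accept then Sum.inr true else Sum.inr false)
      else Sum.inl (A.step q (a.castPred h))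
  start := Sum.inr true
  accept := {Sum.inr true}

lemma step_castSucc (A : DFA (Fin k) Q) {s : Q ⊕ Bool} {q : Q} (hs : sim A s = some q)
    (a : Fin k) : (ext A).step s a.castSucc = Sum.inl (A.step q a) := by
  simp [ext, hs, (Fin.castSucc_lt_last a).ne, Fin.castPred_castSucc]

lemma step_last (A : DFA (Fin k) Q) {s : Q ⊕ Bool} {q : Q} (hs : sim A s = some q) :
    (ext A).step s (Fin.last k) = if q ∈ A.accept then Sum.inr true else Sum.inr false := by
  simp [ext, hs]

lemma step_eq_true (A : DFA (Fin k) Q) {s : Q ⊕ Bool} {b : Fin (k + 1)}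
    (h : (ext A).step s b = Sum.inr true) :
    b = Fin.last k ∧ ∃ q, sim A s = some q ∧ q ∈ A.accept := by
  cases hs : sim A s with
  | none => simp [ext, hs] at h
  | some q =>
    by_cases hb : b = Fin.last k
    · subst hb
      rw [step_last A hs] at h
      by_cases hq : q ∈ A.accept
      · exact ⟨rfl, q, rfl, hq⟩
      · simp [hq] at h
    · have h2 : (ext A).step s b = Sum.inl (A.step q (b.castPred hb)) := by
        simp [ext, hs, hb]
      rw [h2] at h
      simp at h

lemma sim_evalFrom (A : DFA (Fin k) Q) (w : List (Fin k)) :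
    ∀ (s : Q ⊕ Bool) (q : Q), sim A s = some q →
    sim A ((ext A).evalFrom s (w.map Fin.castSucc)) = some (A.evalFrom q w) := by
  induction w with
  | nil => intro s q hs; exact hs
  | cons a w ih =>
    intro s q hs
    show sim A ((ext A).evalFrom ((ext A).step s a.castSucc) (w.map Fin.castSucc)) = _
    rw [step_castSucc A hs a]
    exact ih _ _ rfl

lemma map_castSucc_pmap : ∀ (l : List (Fin (k + 1))) (H : ∀ a ∈ l, a ≠ Fin.last k),
    (l.pmap Fin.castPred H).map Fin.castSucc = l
  | [], _ => rfl
  | a :: l, H => by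
    simp [List.pmap, map_castSucc_pmap l fun a ha => H a (List.mem_cons_of_mem _ ha),
      Fin.castSucc_castPred]

end ParikhProofAux

open ParikhProofAux

/-- For every DFA `A` over the alphabet `Fin k` and every Parikh vector
`p : Fin k → ℕ`, there is a DFA `A'` over the alphabet `Fin (k+1)` whose set of
accepting states is the singleton consisting of its start state, such that
`N(A,p) = N(A',p')`, where `p' = Fin.snoc p 1` agrees with `p` on the first `k` letters
and assigns the value `1` to the new letter. -/
theorem exists_wellformed_dfa_same_parikhCount {k : ℕ} {Q : Type} [Fintype Q]
    (A : DFA (Fin k) Q) (p : Fin k → ℕ) :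
    ∃ (Q' : Type) (_ : Fintype Q') (A' : DFA (Fin (k + 1)) Q'),
      A'.accept = {A'.start} ∧
      parikhCount A p = parikhCount A' (Fin.snoc p 1) := by
  classical
  refine ⟨Q ⊕ Bool, inferInstance, ext A, rfl, ?_⟩
  set A' := ext A with hA'
  -- count lemmas
  have notmem : ∀ w : List (Fin k), Fin.last k ∉ w.map Fin.castSucc := by
    intro w hw
    obtain ⟨a, -, ha⟩ := List.mem_map.1 hw
    exact (Fin.castSucc_lt_last a).ne ha
  have countc : ∀ (w : List (Fin k)) (a : Fin k),
      (w.map Fin.castSucc ++ [Fin.last k]).count a.castSucc = w.count a := by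
    intro w a
    rw [List.count_append, List.count_map_of_injective _ _ (Fin.castSucc_injective k)]
    simp [List.count_singleton', (Fin.castSucc_lt_last a).ne, (Fin.castSucc_lt_last a).ne']
  have countl : ∀ w : List (Fin k),
      (w.map Fin.castSucc ++ [Fin.last k]).count (Fin.last k) = 1 := by
    intro w
    rw [List.count_append, List.count_eq_zero.2 (notmem w)]
    simp
  -- acceptance lemma
  have key : ∀ w : List (Fin k),
      (w.map Fin.castSucc ++ [Fin.last k] ∈ A'.accepts ↔ w ∈ A.accepts) := by
    intro w
    have h1 := sim_evalFrom A w A'.start A.start rfl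
    rw [DFA.mem_accepts, DFA.mem_accepts]
    change A'.evalFrom A'.start (w.map Fin.castSucc ++ [Fin.last k]) ∈ A'.accept ↔ _
    rw [DFA.evalFrom_append_singleton, step_last A h1]
    by_cases hq : A.evalFrom A.start w ∈ A.accept
    · rw [if_pos hq]
      exact iff_of_true (Set.mem_singleton _) hq
    · rw [if_neg hq]
      refine iff_of_false (fun h => ?_) hq
      exact absurd (Set.eq_of_mem_singleton h) (by simp)
  have countfwd : ∀ w : List (Fin k), (∀ a, w.count a = p a) →
      ∀ b, (w.map Fin.castSucc ++ [Fin.last k]).count b = (Fin.snoc p 1 : Fin (k+1) → ℕ) b := by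
    intro w hw b
    induction b using Fin.lastCases with
    | last => rw [countl, Fin.snoc_last]
    | cast a => rw [countc, Fin.snoc_castSucc]; exact hw a
  unfold parikhCount
  refine Nat.card_eq_of_bijective
    (fun x => ⟨x.1.map Fin.castSucc ++ [Fin.last k], (key x.1).2 x.2.1, countfwd x.1 x.2.2⟩) ?_
  constructor
  · rintro ⟨w, hw⟩ ⟨w', hw'⟩ h
    simp only [Subtype.mk.injEq] at h
    have := List.append_cancel_right h
    exact Subtype.ext (List.map_injective_iff.2 (Fin.castSucc_injective k) this)
  · rintro ⟨u, hu1, hu2⟩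
    have hne : u ≠ [] := by
      intro h
      have := hu2 (Fin.last k)
      rw [h, Fin.snoc_last] at this
      simp at this
    obtain ⟨u', b, hub⟩ := u.eq_nil_or_concat.resolve_left hne
    rw [List.concat_eq_append] at hub
    subst hub
    have heval : A'.step (A'.evalFrom A'.start u') b = Sum.inr true := by
      have h := (DFA.mem_accepts _).1 hu1
      change A'.evalFrom A'.start (u' ++ [b]) ∈ A'.accept at h
      rw [DFA.evalFrom_append_singleton] at h
      exact Set.eq_of_mem_singleton h
    obtain ⟨hb, q, hq, hqacc⟩ := step_eq_true A heval
    subst hb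
    have hc0 : u'.count (Fin.last k) = 0 := by
      have := hu2 (Fin.last k)
      rw [Fin.snoc_last, List.count_append] at this
      simpa using this
    have hmem : ∀ a ∈ u', a ≠ Fin.last k := by
      rintro a ha rfl
      exact absurd (List.count_eq_zero.1 hc0) (by exact fun h => h ha)
    set w := u'.pmap Fin.castPred hmem with hw
    have hu' : w.map Fin.castSucc = u' := map_castSucc_pmap u' hmem
    have hsim := sim_evalFrom A w A'.start A.start rfl
    rw [hu'] at hsim
    rw [hsim] at hq
    have hqeq : A.evalFrom A.start w = q := by injection hq
    have hwacc : w ∈ A.accepts := by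
      rw [DFA.mem_accepts]
      show A.evalFrom A.start w ∈ A.accept
      rw [hqeq]; exact hqacc
    have hwc : ∀ a : Fin k, w.count a = p a := by
      intro a
      have h1 := hu2 a.castSucc
      rw [Fin.snoc_castSucc, ← hu', countc] at h1
      exact h1
    exact ⟨⟨w, hwacc, hwc⟩, Subtype.ext (by
      show List.map Fin.castSucc w ++ [Fin.last k] = u' ++ [Fin.last k]
      rw [hu'])⟩
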